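/- Let C be a pointed regular category which is unital. Then the following are equivalent: (i) C is anticommutative; (ii) every central morphism of C is a zero morphism; (iii) every commutative object of C is a zero object. -/

import Mathlib

open CategoryTheory CategoryTheory.Limits

universe v u

variable {C : Type u} [Category.{v} C]

/-- Two morphisms `f : X ⟶ Z` and `g : Y ⟶ Z` in a pointed category are *disjoint*
if whenever `x ≫ f = y ≫ g` then both composites are zero. -/
def CategoryTheory.AreDisjoint [HasZeroMorphisms C]
    {X Y Z : C} (f : X ⟶ Z) (g : Y ⟶ Z) : Prop :=
  ∀ ⦃S : C⦄ (x : S ⟶ X) (y : S ⟶ Y), x ≫ f = y ≫ g → x ≫ f = 0 ∧ y ≫ g = 0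

/-- Two morphisms `f : X ⟶ Z` and `g : Y ⟶ Z` *commute in the sense of Huq* if there
is a cooperator `ρ : X ⨯ Y ⟶ Z` restricting to `f` and `g` along the product inclusions. -/
def CategoryTheory.HuqCommute [HasZeroMorphisms C] [HasBinaryProducts C]
    {X Y Z : C} (f : X ⟶ Z) (g : Y ⟶ Z) : Prop :=
  ∃ ρ : X ⨯ Y ⟶ Z, prod.lift (𝟙 X) 0 ≫ ρ = f ∧ prod.lift 0 (𝟙 Y) ≫ ρ = g

/-- A pointed category with binary products is *anticommutative* if every pair of
commuting morphisms is disjoint. -/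
def CategoryTheory.Anticommutative (C : Type u) [Category.{v} C]
    [HasZeroMorphisms C] [HasBinaryProducts C] : Prop :=
  ∀ ⦃X Y Z : C⦄ (f : X ⟶ Z) (g : Y ⟶ Z), HuqCommute f g → AreDisjoint f g

/-- A morphism `f : X ⟶ Y` is *central* if it commutes with `𝟙 Y`. -/
def CategoryTheory.IsCentral [HasZeroMorphisms C] [HasBinaryProducts C]
    {X Y : C} (f : X ⟶ Y) : Prop :=
  HuqCommute f (𝟙 Y)

/-- An object `M` is *commutative* if `𝟙 M` is central. -/
def CategoryTheory.IsCommutativeObject [HasZeroMorphisms C] [HasBinaryProducts C]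
    (M : C) : Prop :=
  IsCentral (𝟙 M)

/-- `C` is a regular category: finitely complete, has coequalizers of kernel pairs,
and regular epimorphisms are stable under pullback. -/
structure CategoryTheory.IsRegularCategory (C : Type u) [Category.{v} C] : Prop where
  hasFiniteLimits : HasFiniteLimits C
  hasCoeqOfKernelPairs : ∀ ⦃X Y : C⦄ (f : X ⟶ Y),
    HasCoequalizer (pullback.fst f f) (pullback.snd f f)
  regularEpiStable : ∀ ⦃P X Y Z : C⦄ (p₁ : P ⟶ X) (p₂ : P ⟶ Y) (f : X ⟶ Z) (g : Y ⟶ Z),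
    IsPullback p₁ p₂ f g → RegularEpi g → Nonempty (RegularEpi p₁)

/-- A pointed finitely complete category is *unital* if the product inclusions are
jointly strongly epimorphic: every monomorphism into a binary product through which
both product inclusions factor is an isomorphism. -/
def CategoryTheory.IsUnital (C : Type u) [Category.{v} C]
    [HasZeroMorphisms C] [HasBinaryProducts C] : Prop :=
  ∀ ⦃A B M : C⦄ (m : M ⟶ A ⨯ B), Mono m →
    (∃ j₁ : A ⟶ M, j₁ ≫ m = prod.lift (𝟙 A) 0) →
    (∃ j₂ : B ⟶ M, j₂ ≫ m = prod.lift 0 (𝟙 B)) →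
    IsIso m

section Aux2

variable [HasZeroMorphisms C] [HasFiniteLimits C]

/-- In a unital category product inclusions are jointly epimorphic. -/
lemma jointly_epi (huni : ∀ ⦃A B M : C⦄ (m : M ⟶ A ⨯ B), Mono m →
    (∃ j₁ : A ⟶ M, j₁ ≫ m = prod.lift (𝟙 A) 0) →
    (∃ j₂ : B ⟶ M, j₂ ≫ m = prod.lift 0 (𝟙 B)) → IsIso m)
    {A B T : C} (u v : A ⨯ B ⟶ T)
    (h1 : prod.lift (𝟙 A) 0 ≫ u = prod.lift (𝟙 A) 0 ≫ v)
    (h2 : prod.lift 0 (𝟙 B) ≫ u = prod.lift 0 (𝟙 B) ≫ v) : u = v := by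
  haveI : IsIso (equalizer.ι u v) :=
    huni _ inferInstance ⟨equalizer.lift _ h1, equalizer.lift_ι _ _⟩
      ⟨equalizer.lift _ h2, equalizer.lift_ι _ _⟩
  exact eq_of_epi_equalizer

lemma regularEpi_desc {A B T : C} (q : A ⟶ B) (hq : RegularEpi q) (k : A ⟶ T)
    (hk : ∀ ⦃W : C⦄ (u v : W ⟶ A), u ≫ q = v ≫ q → u ≫ k = v ≫ k) :
    ∃ d : B ⟶ T, q ≫ d = k :=
  ⟨Cofork.IsColimit.desc hq.isColimit k (hk _ _ hq.w),
    Cofork.IsColimit.π_desc' hq.isColimit k (hk _ _ hq.w)⟩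

lemma isPullback_prodMap_id_right {A B : C} (e : A ⟶ B) (X : C) :
    IsPullback (prod.map e (𝟙 X)) prod.fst prod.fst e :=
  IsPullback.of_isLimit <| PullbackCone.IsLimit.mk (prod.map_fst e (𝟙 X))
    (fun s => prod.lift s.snd (s.fst ≫ prod.snd))
    (fun s => by apply Limits.prod.hom_ext <;> simp [← s.condition, prod.lift_fst, prod.lift_snd])
    (fun s => by simp [prod.lift_fst, prod.lift_snd])
    (fun s m hm1 hm2 => by
      apply Limits.prod.hom_ext
      · simpa [prod.lift_fst, prod.lift_snd] using hm2
      · have := hm1 =≫ prod.snd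
        simpa [prod.lift_fst, prod.lift_snd] using this)

lemma isPullback_prodMap_id_left {A B : C} (e : A ⟶ B) (X : C) :
    IsPullback (prod.map (𝟙 X) e) prod.snd prod.snd e :=
  IsPullback.of_isLimit <| PullbackCone.IsLimit.mk (prod.map_snd (𝟙 X) e)
    (fun s => prod.lift (s.fst ≫ prod.fst) s.snd)
    (fun s => by apply Limits.prod.hom_ext <;> simp [← s.condition, prod.lift_fst, prod.lift_snd])
    (fun s => by simp [prod.lift_fst, prod.lift_snd])
    (fun s m hm1 hm2 => by
      apply Limits.prod.hom_ext
      · have := hm1 =≫ prod.fst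
        simpa [prod.lift_fst, prod.lift_snd] using this
      · simpa [prod.lift_fst, prod.lift_snd] using hm2)


set_option maxHeartbeats 1000000 in
lemma self_commute_eq_zero (hreg : IsRegularCategory C) (huni : IsUnital C)
    (hcomm : ∀ (M : C), IsCommutativeObject M → IsZero M)
    {S Z : C} (h : S ⟶ Z) (ρ : S ⨯ S ⟶ Z)
    (h1 : prod.lift (𝟙 S) 0 ≫ ρ = h) (h2 : prod.lift 0 (𝟙 S) ≫ ρ = h) : h = 0 := by
  haveI := hreg.hasCoeqOfKernelPairs h
  set a := pullback.fst h h with ha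
  set b := pullback.snd h h with hb
  let I := coequalizer a b
  let e : S ⟶ I := coequalizer.π a b
  let m : I ⟶ Z := coequalizer.desc h pullback.condition
  have hem : e ≫ m = h := coequalizer.π_desc _ _
  have hab : a ≫ e = b ≫ e := coequalizer.condition a b
  -- `m` is a monomorphism
  haveI hm : Mono m := by
    set p₁ := pullback.fst m m with hp₁
    set p₂ := pullback.snd m m with hp₂
    obtain ⟨rπ⟩ := hreg.regularEpiStable (pullback.fst p₁ e) (pullback.snd p₁ e) p₁ e
      (IsPullback.of_hasPullback p₁ e) (coequalizerRegular a b)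
    haveI := rπ
    set π := pullback.fst p₁ e with hπ
    set s := pullback.snd p₁ e with hs
    obtain ⟨rπ₂⟩ := hreg.regularEpiStable (pullback.fst (π ≫ p₂) e)
      (pullback.snd (π ≫ p₂) e) (π ≫ p₂) e (IsPullback.of_hasPullback (π ≫ p₂) e)
      (coequalizerRegular a b)
    haveI := rπ₂
    set π₂ := pullback.fst (π ≫ p₂) e with hπ₂
    set t := pullback.snd (π ≫ p₂) e with ht
    have hue : (π₂ ≫ s) ≫ e = (π₂ ≫ π) ≫ p₁ := by
      rw [Category.assoc, ← pullback.condition (f := p₁) (g := e), Category.assoc]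
    have hve : t ≫ e = (π₂ ≫ π) ≫ p₂ := by
      rw [← pullback.condition (f := π ≫ p₂) (g := e), Category.assoc]
    have hc : p₁ ≫ m = p₂ ≫ m := pullback.condition
    have huv : (π₂ ≫ s) ≫ h = t ≫ h := by
      calc (π₂ ≫ s) ≫ h = ((π₂ ≫ π) ≫ p₁) ≫ m := by rw [← hem, ← Category.assoc, hue]
        _ = ((π₂ ≫ π) ≫ p₂) ≫ m := by simp only [Category.assoc]; rw [hc]
        _ = t ≫ h := by rw [← hve, Category.assoc, hem]
    have hφa : pullback.lift (f := h) (g := h) (π₂ ≫ s) t huv ≫ a = π₂ ≫ s :=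
      pullback.lift_fst _ _ _
    have hφb : pullback.lift (f := h) (g := h) (π₂ ≫ s) t huv ≫ b = t :=
      pullback.lift_snd _ _ _
    have hr : (π₂ ≫ π) ≫ p₁ = (π₂ ≫ π) ≫ p₂ := by
      calc (π₂ ≫ π) ≫ p₁ = (π₂ ≫ s) ≫ e := hue.symm
        _ = (pullback.lift (π₂ ≫ s) t huv ≫ a) ≫ e := by rw [hφa]
        _ = (pullback.lift (π₂ ≫ s) t huv ≫ b) ≫ e := by
            simp only [Category.assoc]; rw [hab]
        _ = t ≫ e := by rw [hφb]
        _ = (π₂ ≫ π) ≫ p₂ := hve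
    haveI : Epi (π₂ ≫ π) := @epi_comp _ _ _ _ _ _ (RegularEpi.epi _ rπ₂) _ (RegularEpi.epi _ rπ)
    have hpp : p₁ = p₂ := by rwa [cancel_epi (π₂ ≫ π)] at hr
    refine ⟨fun {T} x y hxy => ?_⟩
    calc x = pullback.lift x y hxy ≫ p₁ := (pullback.lift_fst x y hxy).symm
      _ = pullback.lift x y hxy ≫ p₂ := by rw [hpp]
      _ = y := pullback.lift_snd x y hxy
  -- the cooperator factors through `m`
  have hj1 : prod.lift (𝟙 S) 0 ≫ ρ = e ≫ m := by rw [h1, hem]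
  have hj2 : prod.lift 0 (𝟙 S) ≫ ρ = e ≫ m := by rw [h2, hem]
  haveI : IsIso (pullback.fst ρ m) := huni _ inferInstance
    ⟨pullback.lift _ e hj1, pullback.lift_fst _ _ _⟩
    ⟨pullback.lift _ e hj2, pullback.lift_fst _ _ _⟩
  set ρ' : S ⨯ S ⟶ I := inv (pullback.fst ρ m) ≫ pullback.snd ρ m with hρ'def
  have hρ'm : ρ' ≫ m = ρ := by
    rw [hρ'def, Category.assoc, ← pullback.condition (f := ρ) (g := m), IsIso.inv_hom_id_assoc]
  have hρ'1 : prod.lift (𝟙 S) 0 ≫ ρ' = e := by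
    rw [← cancel_mono m, Category.assoc, hρ'm, h1, hem]
  have hρ'2 : prod.lift 0 (𝟙 S) ≫ ρ' = e := by
    rw [← cancel_mono m, Category.assoc, hρ'm, h2, hem]
  -- first descent: factor `ρ'` through `e ⨯ 𝟙`
  obtain ⟨re1⟩ := hreg.regularEpiStable (prod.map e (𝟙 S)) prod.fst prod.fst e
    (isPullback_prodMap_id_right e S) (coequalizerRegular a b)
  have e1 : ∀ c : pullback h h ⟶ S,
      prod.lift (𝟙 (pullback h h)) (0 : pullback h h ⟶ S) ≫ prod.map c (𝟙 S)
        = c ≫ prod.lift (𝟙 S) 0 := fun c => by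
    apply Limits.prod.hom_ext <;> simp
  have e2 : ∀ c : pullback h h ⟶ S,
      prod.lift (0 : S ⟶ pullback h h) (𝟙 S) ≫ prod.map c (𝟙 S)
        = prod.lift (0 : S ⟶ S) (𝟙 S) := fun c => by
    apply Limits.prod.hom_ext <;> simp
  have e1' : ∀ c : pullback h h ⟶ S,
      prod.lift (𝟙 (pullback h h)) (0 : pullback h h ⟶ S) ≫ prod.map c (𝟙 S) ≫ ρ' = c ≫ e :=
    fun c => by rw [← Category.assoc, e1 c, Category.assoc, hρ'1]
  have e2' : ∀ c : pullback h h ⟶ S,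
      prod.lift (0 : S ⟶ pullback h h) (𝟙 S) ≫ prod.map c (𝟙 S) ≫ ρ' = e :=
    fun c => by rw [← Category.assoc, e2 c, hρ'2]
  have L1 : prod.map a (𝟙 S) ≫ ρ' = prod.map b (𝟙 S) ≫ ρ' := by
    apply jointly_epi huni
    · rw [e1' a, e1' b, hab]
    · rw [e2' a, e2' b]
  have hk1 : ∀ ⦃W : C⦄ (u v : W ⟶ S ⨯ S),
      u ≫ prod.map e (𝟙 S) = v ≫ prod.map e (𝟙 S) → u ≫ ρ' = v ≫ ρ' := by
    intro W u v huv
    have hfst : (u ≫ prod.fst) ≫ e = (v ≫ prod.fst) ≫ e := by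
      have := huv =≫ prod.fst; simpa using this
    have hsnd : u ≫ prod.snd = v ≫ prod.snd := by
      have := huv =≫ prod.snd; simpa using this
    have hh : (u ≫ prod.fst) ≫ h = (v ≫ prod.fst) ≫ h := by
      rw [← hem, ← Category.assoc, ← Category.assoc, hfst]
    have w1 : prod.lift (pullback.lift _ _ hh) (u ≫ prod.snd) ≫ prod.map a (𝟙 S) = u := by
      apply Limits.prod.hom_ext <;> simp [ha, prod.lift_fst, prod.lift_snd, pullback.lift_fst, pullback.lift_snd]
    have w2 : prod.lift (pullback.lift _ _ hh) (u ≫ prod.snd) ≫ prod.map b (𝟙 S) = v := by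
      apply Limits.prod.hom_ext <;> simp [hb, hsnd, prod.lift_fst, prod.lift_snd, pullback.lift_fst, pullback.lift_snd]
    calc u ≫ ρ' = (prod.lift (pullback.lift _ _ hh) (u ≫ prod.snd) ≫ prod.map a (𝟙 S)) ≫ ρ' := by
          rw [w1]
      _ = (prod.lift (pullback.lift _ _ hh) (u ≫ prod.snd) ≫ prod.map b (𝟙 S)) ≫ ρ' := by
          simp only [Category.assoc]; rw [L1]
      _ = v ≫ ρ' := by rw [w2]
  obtain ⟨ρ₁, hρ₁⟩ := regularEpi_desc _ re1 ρ' hk1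
  haveI : Epi e := inferInstanceAs (Epi (coequalizer.π a b))
  have hι1ρ₁ : prod.lift (𝟙 I) 0 ≫ ρ₁ = 𝟙 I := by
    rw [← cancel_epi e]
    have hx : e ≫ prod.lift (𝟙 I) 0 = prod.lift (𝟙 S) 0 ≫ prod.map e (𝟙 S) := by
      apply Limits.prod.hom_ext <;> simp
    rw [← Category.assoc, hx, Category.assoc, hρ₁, hρ'1, Category.comp_id]
  have hι2ρ₁ : prod.lift (0 : S ⟶ I) (𝟙 S) ≫ ρ₁ = e := by
    have hx : prod.lift (0 : S ⟶ S) (𝟙 S) ≫ prod.map e (𝟙 S) = prod.lift (0 : S ⟶ I) (𝟙 S) := by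
      apply Limits.prod.hom_ext <;> simp
    rw [← hx, Category.assoc, hρ₁, hρ'2]
  -- second descent: factor `ρ₁` through `𝟙 ⨯ e`
  obtain ⟨re2⟩ := hreg.regularEpiStable (prod.map (𝟙 I) e) prod.snd prod.snd e
    (isPullback_prodMap_id_left e I) (coequalizerRegular a b)
  have f1 : ∀ c : pullback h h ⟶ S,
      prod.lift (𝟙 I) (0 : I ⟶ pullback h h) ≫ prod.map (𝟙 I) c
        = prod.lift (𝟙 I) (0 : I ⟶ S) := fun c => by
    apply Limits.prod.hom_ext <;> simp
  have f2 : ∀ c : pullback h h ⟶ S,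
      prod.lift (0 : pullback h h ⟶ I) (𝟙 (pullback h h)) ≫ prod.map (𝟙 I) c
        = c ≫ prod.lift (0 : S ⟶ I) (𝟙 S) := fun c => by
    apply Limits.prod.hom_ext <;> simp
  have f1' : ∀ c : pullback h h ⟶ S,
      prod.lift (𝟙 I) (0 : I ⟶ pullback h h) ≫ prod.map (𝟙 I) c ≫ ρ₁ = 𝟙 I :=
    fun c => by rw [← Category.assoc, f1 c, hι1ρ₁]
  have f2' : ∀ c : pullback h h ⟶ S,
      prod.lift (0 : pullback h h ⟶ I) (𝟙 (pullback h h)) ≫ prod.map (𝟙 I) c ≫ ρ₁ = c ≫ e :=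
    fun c => by rw [← Category.assoc, f2 c, Category.assoc, hι2ρ₁]
  have L2 : prod.map (𝟙 I) a ≫ ρ₁ = prod.map (𝟙 I) b ≫ ρ₁ := by
    apply jointly_epi huni
    · rw [f1' a, f1' b]
    · rw [f2' a, f2' b, hab]
  have hk2 : ∀ ⦃W : C⦄ (u v : W ⟶ I ⨯ S),
      u ≫ prod.map (𝟙 I) e = v ≫ prod.map (𝟙 I) e → u ≫ ρ₁ = v ≫ ρ₁ := by
    intro W u v huv
    have hfst : u ≫ prod.fst = v ≫ prod.fst := by
      have := huv =≫ prod.fst; simpa using this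
    have hsnd : (u ≫ prod.snd) ≫ e = (v ≫ prod.snd) ≫ e := by
      have := huv =≫ prod.snd; simpa using this
    have hh : (u ≫ prod.snd) ≫ h = (v ≫ prod.snd) ≫ h := by
      rw [← hem, ← Category.assoc, ← Category.assoc, hsnd]
    have w1 : prod.lift (u ≫ prod.fst) (pullback.lift _ _ hh) ≫ prod.map (𝟙 I) a = u := by
      apply Limits.prod.hom_ext <;> simp [ha, prod.lift_fst, prod.lift_snd, pullback.lift_fst, pullback.lift_snd]
    have w2 : prod.lift (u ≫ prod.fst) (pullback.lift _ _ hh) ≫ prod.map (𝟙 I) b = v := by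
      apply Limits.prod.hom_ext <;> simp [hb, hfst, prod.lift_fst, prod.lift_snd, pullback.lift_fst, pullback.lift_snd]
    calc u ≫ ρ₁ = (prod.lift (u ≫ prod.fst) (pullback.lift _ _ hh) ≫ prod.map (𝟙 I) a) ≫ ρ₁ := by
          rw [w1]
      _ = (prod.lift (u ≫ prod.fst) (pullback.lift _ _ hh) ≫ prod.map (𝟙 I) b) ≫ ρ₁ := by
          simp only [Category.assoc]; rw [L2]
      _ = v ≫ ρ₁ := by rw [w2]
  obtain ⟨σ, hσ⟩ := regularEpi_desc _ re2 ρ₁ hk2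
  have hι1σ : prod.lift (𝟙 I) 0 ≫ σ = 𝟙 I := by
    have hx : prod.lift (𝟙 I) (0 : I ⟶ S) ≫ prod.map (𝟙 I) e = prod.lift (𝟙 I) 0 := by
      apply Limits.prod.hom_ext <;> simp
    rw [← hx, Category.assoc, hσ, hι1ρ₁]
  have hι2σ : prod.lift 0 (𝟙 I) ≫ σ = 𝟙 I := by
    rw [← cancel_epi e]
    have hx : e ≫ prod.lift (0 : I ⟶ I) (𝟙 I) = prod.lift (0 : S ⟶ I) (𝟙 S) ≫ prod.map (𝟙 I) e := by
      apply Limits.prod.hom_ext <;> simp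
    rw [← Category.assoc, hx, Category.assoc, hσ, hι2ρ₁, Category.comp_id]
  have hIzero : IsZero I := hcomm I ⟨σ, hι1σ, hι2σ⟩
  rw [← hem, hIzero.eq_of_src m 0, comp_zero]

end Aux2

/-- For a pointed regular unital category the following are equivalent:
(i) `C` is anticommutative; (ii) every central morphism is zero;
(iii) every commutative object is a zero object. -/
theorem anticommutative_tfae_of_regular_unital [HasZeroObject C] [HasZeroMorphisms C]
    [HasFiniteLimits C] (hreg : IsRegularCategory C) (huni : IsUnital C) :
    List.TFAE [Anticommutative C,
      ∀ ⦃X Y : C⦄ (f : X ⟶ Y), IsCentral f → f = 0,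
      ∀ (M : C), IsCommutativeObject M → IsZero M] := by
  tfae_have 1 → 2
  · intro hanti X Y f hf
    have := (hanti f (𝟙 Y) hf (𝟙 X) f (by simp)).1
    simpa using this
  tfae_have 2 → 3
  · intro hz M hM
    exact (IsZero.iff_id_eq_zero M).mpr (hz (𝟙 M) hM)
  tfae_have 3 → 1
  · intro hcomm X Y Z f g hfg S x y hxy
    obtain ⟨ρ, hρ1, hρ2⟩ := hfg
    have c1 : prod.lift (𝟙 S) 0 ≫ prod.map x y = x ≫ prod.lift (𝟙 X) 0 := by
      apply Limits.prod.hom_ext <;> simp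
    have c2 : prod.lift 0 (𝟙 S) ≫ prod.map x y = y ≫ prod.lift 0 (𝟙 Y) := by
      apply Limits.prod.hom_ext <;> simp
    have key := self_commute_eq_zero hreg huni hcomm (x ≫ f) (prod.map x y ≫ ρ)
      (by rw [← Category.assoc, c1, Category.assoc, hρ1])
      (by rw [← Category.assoc, c2, Category.assoc, hρ2, ← hxy])
    exact ⟨key, hxy ▸ key⟩
  tfae_finish
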